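/- arXiv:2401.03213 — 2 statements merged into one kernel-verified Lean document; each statement's English description precedes it below -/
import Mathlib

section
/- For an integer $k \geq 3$ and complex numbers $x, y$ with $|x| < 1$, $|y| < 1$, $x, y \neq 0$: $\sum_{j=1}^{k-1} 2^{j-1}\left( \mathrm{Li}_{k-j,j}(x^{-1}y, x) + \mathrm{Li}_{k-j,j}(xy^{-1}, y) \right) + \mathrm{Li}_{1,k-1}(x^{-1}, xy) + \mathrm{Li}_{1,k-1}(y^{-1}, xy) = (\mathrm{Li}_1(x) + \mathrm{Li}_1(y))\,\mathrm{Li}_{k-1}(xy) + (k-1)\,\mathrm{Li}_k(xy)$. -/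
open scoped BigOperators

/-- The polylogarithm `Li_k(z) = ∑_{m ≥ 1} z^m / m^k`. -/
noncomputable def Li (k : ℕ) (z : ℂ) : ℂ :=
  ∑' m : ℕ, z ^ (m + 1) / ((m + 1 : ℕ) : ℂ) ^ k

/-- The double polylogarithm `Li_{k₁,k₂}(z₁,z₂) = ∑_{0 < m₁ < m₂} z₁^{m₁} z₂^{m₂} / (m₁^{k₁} m₂^{k₂})`,
parametrized by `m₁ = p.1 + 1`, `m₂ = p.1 + p.2 + 2`. -/
noncomputable def Li₂ (k₁ k₂ : ℕ) (z₁ z₂ : ℂ) : ℂ :=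
  ∑' p : ℕ × ℕ, z₁ ^ (p.1 + 1) * z₂ ^ (p.1 + p.2 + 2) /
    (((p.1 + 1) ^ k₁ * (p.1 + p.2 + 2) ^ k₂ : ℕ) : ℂ)

set_option maxHeartbeats 1000000



lemma icc_range (k : ℕ) (f : ℕ → ℂ) :
    ∑ j ∈ Finset.Icc 1 (k-1), f j = ∑ i ∈ Finset.range (k-1), f (i+1) := by
  rw [← Finset.Ico_add_one_right_eq_Icc, Finset.sum_Ico_eq_sum_range]
  exact Finset.sum_congr rfl (fun i _ => by congr 1; omega)

lemma geom_aux (k : ℕ) (hk : 1 ≤ k) (A n : ℂ) (hA : A ≠ 0) (hn : n ≠ 0) :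
    ∑ j ∈ Finset.Icc 1 (k-1), (2:ℂ)^(j-1) / (A^(k-j) * n^j)
      = (∑ i ∈ Finset.range (k-1), (2*A)^i * n^(k-1-1-i)) / (A^(k-1) * n^(k-1)) := by
  rw [icc_range k, Finset.sum_div]
  apply Finset.sum_congr rfl
  intro i hi
  rw [Finset.mem_range] at hi
  have h1 : A^(k-1) = A^(k-(i+1)) * A^i := by rw [← pow_add]; congr 1; omega
  have h2 : n^(k-1) = n^(i+1) * n^(k-1-1-i) := by rw [← pow_add]; congr 1; omega
  have e1 : i + 1 - 1 = i := by omega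
  rw [e1, h1, h2, mul_pow]
  field_simp

lemma key_frac (A B P Q N T GA GB : ℂ) (hBAs : B - A ≠ 0)
    (hPne : P ≠ 0) (hQne : Q ≠ 0) (hNne : N ≠ 0)
    (hGA : GA * (A - B) = T * P - N) (hGB : GB * (B - A) = T * Q - N) :
    GA / (P * N) + GB / (Q * N) + ((B - A) * Q)⁻¹ = ((B - A) * P)⁻¹ := by
  have hGA2 : GA * (B - A) = N - T * P := by linear_combination -hGA
  have h1 : P * N ≠ 0 := mul_ne_zero hPne hNne
  have h2 : Q * N ≠ 0 := mul_ne_zero hQne hNne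
  have h3 : (B - A) * Q ≠ 0 := mul_ne_zero hBAs hQne
  have h4 : (B - A) * P ≠ 0 := mul_ne_zero hBAs hPne
  rw [inv_eq_one_div, inv_eq_one_div, div_add_div _ _ h1 h2,
    div_add_div _ _ (mul_ne_zero h1 h2) h3, div_eq_div_iff (mul_ne_zero (mul_ne_zero h1 h2) h3) h4]
  linear_combination (Q*N*Q*(B-A)*P) * hGA2 + (P*N*Q*(B-A)*P) * hGB

lemma S_lt (k : ℕ) (hk : 3 ≤ k) (A B : ℂ) (hA : A ≠ 0) (hB : B ≠ 0)
    (hn : A + B ≠ 0) (hAB : A ≠ B) :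
    ∑ j ∈ Finset.Icc 1 (k-1), (2:ℂ)^(j-1) * ((A^(k-j) * (A+B)^j)⁻¹ + (B^(k-j) * (A+B)^j)⁻¹)
      + ((B - A) * B^(k-1))⁻¹ = ((B - A) * A^(k-1))⁻¹ := by
  have hBAs : B - A ≠ 0 := sub_ne_zero.mpr (Ne.symm hAB)
  have hsplit : ∀ j ∈ Finset.Icc 1 (k-1), (2:ℂ)^(j-1) * ((A^(k-j) * (A+B)^j)⁻¹ + (B^(k-j) * (A+B)^j)⁻¹)
      = (2:ℂ)^(j-1) / (A^(k-j) * (A+B)^j) + (2:ℂ)^(j-1) / (B^(k-j) * (A+B)^j) := by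
    intro j _; ring
  rw [Finset.sum_congr rfl hsplit, Finset.sum_add_distrib,
    geom_aux k (by omega) A (A+B) hA hn,
    geom_aux k (by omega) B (A+B) hB hn]
  have hGA' : (∑ i ∈ Finset.range (k-1), (2*A)^i * (A+B)^(k-1-1-i)) * (A - B)
      = 2^(k-1) * A^(k-1) - (A+B)^(k-1) := by
    have h := geom_sum₂_mul (2*A) (A+B) (k-1)
    rw [mul_pow] at h
    linear_combination h
  have hGB' : (∑ i ∈ Finset.range (k-1), (2*B)^i * (A+B)^(k-1-1-i)) * (B - A)
      = 2^(k-1) * B^(k-1) - (A+B)^(k-1) := by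
    have h := geom_sum₂_mul (2*B) (A+B) (k-1)
    rw [mul_pow] at h
    linear_combination h
  exact key_frac A B (A^(k-1)) (B^(k-1)) ((A+B)^(k-1)) (2^(k-1)) _ _ hBAs
    (pow_ne_zero _ hA) (pow_ne_zero _ hB) (pow_ne_zero _ hn) hGA' hGB'

lemma S_diag (k : ℕ) (hk : 3 ≤ k) (A : ℂ) (hA : A ≠ 0) :
    ∑ j ∈ Finset.Icc 1 (k-1), (2:ℂ)^(j-1) * ((A^(k-j) * (A+A)^j)⁻¹ + (A^(k-j) * (A+A)^j)⁻¹)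
      = ((k:ℂ)-1) * (A^k)⁻¹ := by
  have h : ∀ j ∈ Finset.Icc 1 (k-1), (2:ℂ)^(j-1) * ((A^(k-j) * (A+A)^j)⁻¹ + (A^(k-j) * (A+A)^j)⁻¹)
      = (A^k)⁻¹ := by
    intro j hj
    rw [Finset.mem_Icc] at hj
    have h2 : A^(k-j) * A^j = A^k := by rw [← pow_add]; congr 1; omega
    have h3 : (2:ℂ)^(j-1) * 2 = 2^j := by rw [← pow_succ]; congr 1; omega
    have hAk : A^k ≠ 0 := pow_ne_zero _ hA
    have h2j : ((2:ℂ)^j) ≠ 0 := pow_ne_zero _ two_ne_zero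
    have hX : A^(k-j) * (A+A)^j = 2^j * A^k := by
      rw [show A + A = 2 * A by ring, mul_pow,
        show A^(k-j)*(2^j*A^j) = 2^j*(A^(k-j)*A^j) by ring, h2]
    rw [hX]
    field_simp
    linear_combination h3
  rw [Finset.sum_congr rfl h, Finset.sum_const, Nat.card_Icc]
  rw [show k - 1 + 1 - 1 = k - 1 from by omega, nsmul_eq_mul]
  congr 1
  push_cast [Nat.cast_sub (by omega : 1 ≤ k)]
  ring



noncomputable def t1 (k j : ℕ) (x y : ℂ) (p : ℕ × ℕ) : ℂ :=
  x^(p.1+1) * y^(p.2+1) / (((p.2+1)^(k-j) * (p.1+p.2+2)^j : ℕ) : ℂ)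
noncomputable def t2 (k j : ℕ) (x y : ℂ) (p : ℕ × ℕ) : ℂ :=
  x^(p.1+1) * y^(p.2+1) / (((p.1+1)^(k-j) * (p.1+p.2+2)^j : ℕ) : ℂ)
noncomputable def t3 (k : ℕ) (x y : ℂ) (p : ℕ × ℕ) : ℂ :=
  if p.1 < p.2 then x^(p.1+1) * y^(p.2+1) / (((p.2-p.1) * (p.2+1)^(k-1) : ℕ) : ℂ) else 0
noncomputable def t4 (k : ℕ) (x y : ℂ) (p : ℕ × ℕ) : ℂ :=
  if p.2 < p.1 then x^(p.1+1) * y^(p.2+1) / (((p.1-p.2) * (p.1+1)^(k-1) : ℕ) : ℂ) else 0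
noncomputable def r1 (k : ℕ) (x y : ℂ) (p : ℕ × ℕ) : ℂ :=
  if p.2 < p.1 then x^(p.1+1) * y^(p.2+1) / (((p.1-p.2) * (p.2+1)^(k-1) : ℕ) : ℂ) else 0
noncomputable def r2 (k : ℕ) (x y : ℂ) (p : ℕ × ℕ) : ℂ :=
  if p.1 < p.2 then x^(p.1+1) * y^(p.2+1) / (((p.2-p.1) * (p.1+1)^(k-1) : ℕ) : ℂ) else 0
noncomputable def r3 (k : ℕ) (x y : ℂ) (p : ℕ × ℕ) : ℂ :=
  if p.1 = p.2 then x^(p.1+1) * y^(p.2+1) / (((p.1+1)^k : ℕ) : ℂ) else 0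

lemma conv1 (k j : ℕ) (x y : ℂ) (hx0 : x ≠ 0) :
    Li₂ (k-j) j (x⁻¹ * y) x = ∑' p : ℕ × ℕ, t1 k j x y p := by
  rw [Li₂, ← Equiv.tsum_eq (Equiv.prodComm ℕ ℕ) (t1 k j x y)]
  apply tsum_congr
  rintro ⟨a, b⟩
  simp only [Equiv.prodComm_apply, Prod.swap_prod_mk, t1]
  rw [show b+a+2 = a+b+2 from by omega]
  congr 1
  rw [mul_pow, inv_pow, show a+b+2 = (a+1)+(b+1) from by omega, pow_add]
  have : x^(a+1) ≠ 0 := pow_ne_zero _ hx0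
  field_simp
  ring

lemma conv2 (k j : ℕ) (x y : ℂ) (hy0 : y ≠ 0) :
    Li₂ (k-j) j (x * y⁻¹) y = ∑' p : ℕ × ℕ, t2 k j x y p := by
  rw [Li₂]
  apply tsum_congr
  rintro ⟨a, b⟩
  simp only [t2]
  congr 1
  rw [mul_pow, inv_pow, show a+b+2 = (a+1)+(b+1) from by omega, pow_add]
  have : y^(a+1) ≠ 0 := pow_ne_zero _ hy0
  field_simp
  ring

lemma conv3 (k : ℕ) (x y : ℂ) (hx0 : x ≠ 0) :
    Li₂ 1 (k-1) x⁻¹ (x * y) = ∑' p : ℕ × ℕ, t3 k x y p := by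
  have hinj : Function.Injective (fun p : ℕ × ℕ => (p.2, p.1+p.2+1)) := by
    rintro ⟨a,b⟩ ⟨c,d⟩ h
    simp only [Prod.mk.injEq] at h
    exact Prod.ext (by omega) (by omega)
  have hsupp : Function.support (t3 k x y) ⊆ Set.range (fun p : ℕ × ℕ => (p.2, p.1+p.2+1)) := by
    rintro ⟨a,b⟩ h
    rw [Function.mem_support] at h
    have hab : a < b := by
      by_contra hc
      exact h (if_neg hc)
    exact ⟨(b-a-1, a), by
      show (a, (b-a-1)+a+1) = (a, b)
      rw [show (b-a-1)+a+1 = b from by omega]⟩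
  rw [Li₂, ← Function.Injective.tsum_eq hinj hsupp]
  apply tsum_congr
  rintro ⟨a, b⟩
  simp only [t3]
  rw [if_pos (by omega : b < a+b+1)]
  rw [show a+b+1-b = a+1 from by omega, show a+b+1+1 = a+b+2 from by omega, pow_one]
  congr 1
  rw [mul_pow, inv_pow, show a+b+2 = (a+1)+(b+1) from by omega, pow_add]
  have : x^(a+1) ≠ 0 := pow_ne_zero _ hx0
  field_simp
  ring

lemma conv4 (k : ℕ) (x y : ℂ) (hy0 : y ≠ 0) :
    Li₂ 1 (k-1) y⁻¹ (x * y) = ∑' p : ℕ × ℕ, t4 k x y p := by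
  have hinj : Function.Injective (fun p : ℕ × ℕ => (p.1+p.2+1, p.2)) := by
    rintro ⟨a,b⟩ ⟨c,d⟩ h
    simp only [Prod.mk.injEq] at h
    exact Prod.ext (by omega) (by omega)
  have hsupp : Function.support (t4 k x y) ⊆ Set.range (fun p : ℕ × ℕ => (p.1+p.2+1, p.2)) := by
    rintro ⟨a,b⟩ h
    rw [Function.mem_support] at h
    have hab : b < a := by
      by_contra hc
      exact h (if_neg hc)
    exact ⟨(a-b-1, b), by
      show ((a-b-1)+b+1, b) = (a, b)
      rw [show (a-b-1)+b+1 = a from by omega]⟩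
  rw [Li₂, ← Function.Injective.tsum_eq hinj hsupp]
  apply tsum_congr
  rintro ⟨a, b⟩
  simp only [t4]
  rw [if_pos (by omega : b < a+b+1)]
  rw [show a+b+1-b = a+1 from by omega, show a+b+1+1 = a+b+2 from by omega, pow_one]
  congr 1
  rw [mul_pow, inv_pow, show a+b+2 = (a+1)+(b+1) from by omega, pow_add]
  have : y^(a+1) ≠ 0 := pow_ne_zero _ hy0
  field_simp
  ring
lemma Li_term_summable (z : ℂ) (hz : ‖z‖ < 1) (e : ℕ) :
    Summable (fun m : ℕ => ‖z^(m+1) / ((m+1 : ℕ) : ℂ)^e‖) := by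
  have hgeom : Summable (fun m : ℕ => ‖z‖^(m+1)) := by
    simp_rw [pow_succ]
    exact (summable_geometric_of_lt_one (norm_nonneg z) hz).mul_right _
  apply Summable.of_nonneg_of_le (fun m => norm_nonneg _) (fun m => ?_) hgeom
  rw [norm_div, norm_pow, norm_pow, Complex.norm_natCast]
  apply div_le_self (by positivity)
  apply one_le_pow₀
  exact_mod_cast Nat.one_le_iff_ne_zero.mpr (by omega)

lemma conv5 (k : ℕ) (x y : ℂ) (hx : ‖x‖ < 1) (hxy : ‖x * y‖ < 1) :
    Li 1 x * Li (k-1) (x * y) = ∑' p : ℕ × ℕ, r1 k x y p := by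
  rw [Li, Li, tsum_mul_tsum_of_summable_norm (Li_term_summable x hx 1) (Li_term_summable (x*y) hxy (k-1))]
  have hinj : Function.Injective (fun z : ℕ × ℕ => ((z.1+z.2+1 : ℕ), z.2)) := by
    rintro ⟨a,b⟩ ⟨c,d⟩ h
    simp only [Prod.mk.injEq] at h
    exact Prod.ext (by omega) (by omega)
  have hsupp : Function.support (r1 k x y) ⊆ Set.range (fun z : ℕ × ℕ => ((z.1+z.2+1 : ℕ), z.2)) := by
    rintro ⟨a,b⟩ h
    rw [Function.mem_support] at h
    have hab : b < a := by
      by_contra hc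
      exact h (if_neg hc)
    exact ⟨(a-b-1, b), by
      show ((a-b-1)+b+1, b) = (a, b)
      rw [show (a-b-1)+b+1 = a from by omega]⟩
  rw [← Function.Injective.tsum_eq hinj hsupp]
  apply tsum_congr
  rintro ⟨a, b⟩
  simp only [r1]
  rw [if_pos (by omega : b < a+b+1)]
  rw [show a+b+1-b = a+1 from by omega, show a+b+1+1 = a+b+2 from by omega]
  have h1 : ((a+1 : ℕ) : ℂ) ≠ 0 := Nat.cast_ne_zero.mpr (by omega)
  have h2 : ((b+1 : ℕ) : ℂ) ≠ 0 := Nat.cast_ne_zero.mpr (by omega)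
  push_cast
  rw [mul_pow]
  have h3 : ((b:ℂ)+1)^(k-1) ≠ 0 := pow_ne_zero _ (by exact_mod_cast h2)
  field_simp
  ring

lemma conv6 (k : ℕ) (x y : ℂ) (hy : ‖y‖ < 1) (hxy : ‖x * y‖ < 1) :
    Li 1 y * Li (k-1) (x * y) = ∑' p : ℕ × ℕ, r2 k x y p := by
  rw [Li, Li, tsum_mul_tsum_of_summable_norm (Li_term_summable y hy 1) (Li_term_summable (x*y) hxy (k-1))]
  have hinj : Function.Injective (fun z : ℕ × ℕ => (z.2, (z.1+z.2+1 : ℕ))) := by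
    rintro ⟨a,b⟩ ⟨c,d⟩ h
    simp only [Prod.mk.injEq] at h
    exact Prod.ext (by omega) (by omega)
  have hsupp : Function.support (r2 k x y) ⊆ Set.range (fun z : ℕ × ℕ => (z.2, (z.1+z.2+1 : ℕ))) := by
    rintro ⟨a,b⟩ h
    rw [Function.mem_support] at h
    have hab : a < b := by
      by_contra hc
      exact h (if_neg hc)
    exact ⟨(b-a-1, a), by
      show (a, (b-a-1)+a+1) = (a, b)
      rw [show (b-a-1)+a+1 = b from by omega]⟩
  rw [← Function.Injective.tsum_eq hinj hsupp]
  apply tsum_congr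
  rintro ⟨a, b⟩
  simp only [r2]
  rw [if_pos (by omega : b < a+b+1)]
  rw [show a+b+1-b = a+1 from by omega, show a+b+1+1 = a+b+2 from by omega]
  have h1 : ((a+1 : ℕ) : ℂ) ≠ 0 := Nat.cast_ne_zero.mpr (by omega)
  have h2 : ((b+1 : ℕ) : ℂ) ≠ 0 := Nat.cast_ne_zero.mpr (by omega)
  push_cast
  rw [mul_pow]
  have h3 : ((b:ℂ)+1)^(k-1) ≠ 0 := pow_ne_zero _ (by exact_mod_cast h2)
  field_simp
  ring

lemma conv7 (k : ℕ) (x y : ℂ) :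
    Li k (x * y) = ∑' p : ℕ × ℕ, r3 k x y p := by
  have hinj : Function.Injective (fun n : ℕ => ((n : ℕ), n)) := by
    intro a b h
    simpa using h
  have hsupp : Function.support (r3 k x y) ⊆ Set.range (fun n : ℕ => ((n : ℕ), n)) := by
    rintro ⟨a,b⟩ h
    rw [Function.mem_support] at h
    have hab : a = b := by
      by_contra hc
      exact h (if_neg hc)
    exact ⟨a, by rw [hab]⟩
  rw [Li, ← Function.Injective.tsum_eq hinj hsupp]
  apply tsum_congr
  intro n
  simp only [r3, if_pos rfl]
  push_cast
  rw [mul_pow]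

lemma norm_term_le (x y : ℂ) (a b N : ℕ) (hN : 1 ≤ N) :
    ‖x^(a+1) * y^(b+1) / ((N:ℕ) : ℂ)‖ ≤ ‖x‖^(a+1) * ‖y‖^(b+1) := by
  rw [norm_div, norm_mul, norm_pow, norm_pow, Complex.norm_natCast]
  apply div_le_self (by positivity)
  exact_mod_cast hN

lemma summable_of_bound (x y : ℂ) (hx : ‖x‖ < 1) (hy : ‖y‖ < 1) (f : ℕ × ℕ → ℂ)
    (hf : ∀ p : ℕ × ℕ, ‖f p‖ ≤ ‖x‖^(p.1+1) * ‖y‖^(p.2+1)) : Summable f := by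
  have h1 : Summable (fun n : ℕ => ‖x‖^(n+1)) := by
    simp_rw [pow_succ]
    exact (summable_geometric_of_lt_one (norm_nonneg x) hx).mul_right _
  have h2 : Summable (fun n : ℕ => ‖y‖^(n+1)) := by
    simp_rw [pow_succ]
    exact (summable_geometric_of_lt_one (norm_nonneg y) hy).mul_right _
  have hxnn : (0 : ℕ → ℝ) ≤ fun n => ‖x‖^(n+1) := fun n => by positivity
  have hynn : (0 : ℕ → ℝ) ≤ fun n => ‖y‖^(n+1) := fun n => by positivity
  have hb : Summable (fun p : ℕ × ℕ => ‖x‖^(p.1+1) * ‖y‖^(p.2+1)) :=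
    h1.mul_of_nonneg h2 hxnn hynn
  exact Summable.of_norm_bounded hb hf

lemma t1_bound (k j : ℕ) (x y : ℂ) (p : ℕ × ℕ) :
    ‖t1 k j x y p‖ ≤ ‖x‖^(p.1+1) * ‖y‖^(p.2+1) := by
  unfold t1; exact norm_term_le x y p.1 p.2 _ (Nat.one_le_iff_ne_zero.mpr (by positivity))

lemma t2_bound (k j : ℕ) (x y : ℂ) (p : ℕ × ℕ) :
    ‖t2 k j x y p‖ ≤ ‖x‖^(p.1+1) * ‖y‖^(p.2+1) := by
  unfold t2; exact norm_term_le x y p.1 p.2 _ (Nat.one_le_iff_ne_zero.mpr (by positivity))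

lemma ite_bound (x y : ℂ) (c : Prop) [Decidable c] (a b N : ℕ) (hN : c → 1 ≤ N) :
    ‖if c then x^(a+1) * y^(b+1) / ((N:ℕ) : ℂ) else 0‖ ≤ ‖x‖^(a+1) * ‖y‖^(b+1) := by
  split
  · exact norm_term_le x y a b N (hN (by assumption))
  · simp; positivity

lemma t3_bound (k : ℕ) (x y : ℂ) (p : ℕ × ℕ) :
    ‖t3 k x y p‖ ≤ ‖x‖^(p.1+1) * ‖y‖^(p.2+1) := by
  unfold t3; exact ite_bound x y _ _ _ _ (fun h => Nat.mul_pos (by omega) (by positivity))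

lemma t4_bound (k : ℕ) (x y : ℂ) (p : ℕ × ℕ) :
    ‖t4 k x y p‖ ≤ ‖x‖^(p.1+1) * ‖y‖^(p.2+1) := by
  unfold t4; exact ite_bound x y _ _ _ _ (fun h => Nat.mul_pos (by omega) (by positivity))

lemma r1_bound (k : ℕ) (x y : ℂ) (p : ℕ × ℕ) :
    ‖r1 k x y p‖ ≤ ‖x‖^(p.1+1) * ‖y‖^(p.2+1) := by
  unfold r1; exact ite_bound x y _ _ _ _ (fun h => Nat.mul_pos (by omega) (by positivity))

lemma r2_bound (k : ℕ) (x y : ℂ) (p : ℕ × ℕ) :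
    ‖r2 k x y p‖ ≤ ‖x‖^(p.1+1) * ‖y‖^(p.2+1) := by
  unfold r2; exact ite_bound x y _ _ _ _ (fun h => Nat.mul_pos (by omega) (by positivity))

lemma r3_bound (k : ℕ) (x y : ℂ) (p : ℕ × ℕ) :
    ‖r3 k x y p‖ ≤ ‖x‖^(p.1+1) * ‖y‖^(p.2+1) := by
  unfold r3; exact ite_bound x y _ _ _ _ (fun h => Nat.one_le_iff_ne_zero.mpr (by positivity))


lemma pointwise_lt (k : ℕ) (hk : 3 ≤ k) (x y : ℂ) (a b : ℕ) (h : a < b)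
    (hA : ((a:ℂ)+1) ≠ 0) (hB : ((b:ℂ)+1) ≠ 0) (hn : ((a:ℂ)+1) + ((b:ℂ)+1) ≠ 0) :
    ∑ j ∈ Finset.Icc 1 (k-1), (2:ℂ)^(j-1) * (t1 k j x y (a,b) + t2 k j x y (a,b))
      + t3 k x y (a,b) + t4 k x y (a,b)
    = r1 k x y (a,b) + r2 k x y (a,b) + ((k:ℂ)-1) * r3 k x y (a,b) := by
  have hAB : ((a:ℂ)+1) ≠ ((b:ℂ)+1) := by
    intro heq
    have : (a:ℂ) = (b:ℂ) := by linear_combination heq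
    exact (show a ≠ b by omega) (by exact_mod_cast this)
  simp only [t1, t2, t3, t4, r1, r2, r3]
  rw [if_pos h, if_neg (by omega : ¬ b < a), if_neg (by omega : ¬ b < a), if_pos h,
    if_neg (by omega : ¬ a = b)]
  simp only [div_eq_mul_inv, mul_zero, add_zero, zero_add]
  push_cast [Nat.cast_sub h.le]
  simp only [show ((a:ℂ)+(b:ℂ)+2) = ((a:ℂ)+1)+((b:ℂ)+1) from by ring,
    show ((b:ℂ)-(a:ℂ)) = ((b:ℂ)+1)-((a:ℂ)+1) from by ring]
  have key := S_lt k hk ((a:ℂ)+1) ((b:ℂ)+1) hA hB hn hAB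
  have hsum : ∑ j ∈ Finset.Icc 1 (k-1), (2:ℂ)^(j-1) *
        (x^(a+1)*y^(b+1) * ((((b:ℂ)+1)^(k-j) * (((a:ℂ)+1)+((b:ℂ)+1))^j)⁻¹)
          + x^(a+1)*y^(b+1) * ((((a:ℂ)+1)^(k-j) * (((a:ℂ)+1)+((b:ℂ)+1))^j)⁻¹))
      = x^(a+1)*y^(b+1) * ∑ j ∈ Finset.Icc 1 (k-1), (2:ℂ)^(j-1) *
        ((((a:ℂ)+1)^(k-j) * (((a:ℂ)+1)+((b:ℂ)+1))^j)⁻¹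
          + (((b:ℂ)+1)^(k-j) * (((a:ℂ)+1)+((b:ℂ)+1))^j)⁻¹) := by
    rw [Finset.mul_sum]
    exact Finset.sum_congr rfl fun j _ => by ring
  rw [hsum]
  linear_combination (x^(a+1)*y^(b+1)) * key

lemma pointwise_gt (k : ℕ) (hk : 3 ≤ k) (x y : ℂ) (a b : ℕ) (h : b < a)
    (hA : ((a:ℂ)+1) ≠ 0) (hB : ((b:ℂ)+1) ≠ 0) (hn : ((a:ℂ)+1) + ((b:ℂ)+1) ≠ 0) :
    ∑ j ∈ Finset.Icc 1 (k-1), (2:ℂ)^(j-1) * (t1 k j x y (a,b) + t2 k j x y (a,b))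
      + t3 k x y (a,b) + t4 k x y (a,b)
    = r1 k x y (a,b) + r2 k x y (a,b) + ((k:ℂ)-1) * r3 k x y (a,b) := by
  have hAB : ((b:ℂ)+1) ≠ ((a:ℂ)+1) := by
    intro heq
    have : (b:ℂ) = (a:ℂ) := by linear_combination heq
    exact (show b ≠ a by omega) (by exact_mod_cast this)
  simp only [t1, t2, t3, t4, r1, r2, r3]
  rw [if_neg (by omega : ¬ a < b), if_pos h, if_pos h, if_neg (by omega : ¬ a < b),
    if_neg (by omega : ¬ a = b)]
  simp only [div_eq_mul_inv, mul_zero, add_zero, zero_add]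
  push_cast [Nat.cast_sub h.le]
  simp only [show ((a:ℂ)+(b:ℂ)+2) = ((b:ℂ)+1)+((a:ℂ)+1) from by ring,
    show ((a:ℂ)-(b:ℂ)) = ((a:ℂ)+1)-((b:ℂ)+1) from by ring]
  have key := S_lt k hk ((b:ℂ)+1) ((a:ℂ)+1) hB hA (by
    intro hc; apply hn; linear_combination hc) hAB
  have hsum : ∑ j ∈ Finset.Icc 1 (k-1), (2:ℂ)^(j-1) *
        (x^(a+1)*y^(b+1) * ((((b:ℂ)+1)^(k-j) * (((b:ℂ)+1)+((a:ℂ)+1))^j)⁻¹)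
          + x^(a+1)*y^(b+1) * ((((a:ℂ)+1)^(k-j) * (((b:ℂ)+1)+((a:ℂ)+1))^j)⁻¹))
      = x^(a+1)*y^(b+1) * ∑ j ∈ Finset.Icc 1 (k-1), (2:ℂ)^(j-1) *
        ((((b:ℂ)+1)^(k-j) * (((b:ℂ)+1)+((a:ℂ)+1))^j)⁻¹
          + (((a:ℂ)+1)^(k-j) * (((b:ℂ)+1)+((a:ℂ)+1))^j)⁻¹) := by
    rw [Finset.mul_sum]
    exact Finset.sum_congr rfl fun j _ => by ring
  rw [hsum]
  linear_combination (x^(a+1)*y^(b+1)) * key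

lemma pointwise_diag (k : ℕ) (hk : 3 ≤ k) (x y : ℂ) (a : ℕ)
    (hA : ((a:ℂ)+1) ≠ 0) :
    ∑ j ∈ Finset.Icc 1 (k-1), (2:ℂ)^(j-1) * (t1 k j x y (a,a) + t2 k j x y (a,a))
      + t3 k x y (a,a) + t4 k x y (a,a)
    = r1 k x y (a,a) + r2 k x y (a,a) + ((k:ℂ)-1) * r3 k x y (a,a) := by
  simp only [t1, t2, t3, t4, r1, r2, r3, lt_self_iff_false, if_false, if_pos rfl]
  simp only [div_eq_mul_inv, mul_zero, add_zero, zero_add]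
  push_cast
  simp only [show ((a:ℂ)+(a:ℂ)+2) = ((a:ℂ)+1)+((a:ℂ)+1) from by ring]
  have key := S_diag k hk ((a:ℂ)+1) hA
  have hsum : ∑ j ∈ Finset.Icc 1 (k-1), (2:ℂ)^(j-1) *
        (x^(a+1)*y^(a+1) * ((((a:ℂ)+1)^(k-j) * (((a:ℂ)+1)+((a:ℂ)+1))^j)⁻¹)
          + x^(a+1)*y^(a+1) * ((((a:ℂ)+1)^(k-j) * (((a:ℂ)+1)+((a:ℂ)+1))^j)⁻¹))
      = x^(a+1)*y^(a+1) * ∑ j ∈ Finset.Icc 1 (k-1), (2:ℂ)^(j-1) *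
        ((((a:ℂ)+1)^(k-j) * (((a:ℂ)+1)+((a:ℂ)+1))^j)⁻¹
          + (((a:ℂ)+1)^(k-j) * (((a:ℂ)+1)+((a:ℂ)+1))^j)⁻¹) := by
    rw [Finset.mul_sum]
    exact Finset.sum_congr rfl fun j _ => by ring
  rw [hsum]
  linear_combination (x^(a+1)*y^(a+1)) * key

lemma pointwise (k : ℕ) (hk : 3 ≤ k) (x y : ℂ) (a b : ℕ) :
    ∑ j ∈ Finset.Icc 1 (k-1), (2:ℂ)^(j-1) * (t1 k j x y (a,b) + t2 k j x y (a,b))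
      + t3 k x y (a,b) + t4 k x y (a,b)
    = r1 k x y (a,b) + r2 k x y (a,b) + ((k:ℂ)-1) * r3 k x y (a,b) := by
  have hA : ((a:ℂ)+1) ≠ 0 := by
    have := Nat.cast_ne_zero (R := ℂ).mpr (Nat.succ_ne_zero a)
    push_cast at this; exact this
  have hB : ((b:ℂ)+1) ≠ 0 := by
    have := Nat.cast_ne_zero (R := ℂ).mpr (Nat.succ_ne_zero b)
    push_cast at this; exact this
  have hn : ((a:ℂ)+1) + ((b:ℂ)+1) ≠ 0 := by
    have := Nat.cast_ne_zero (R := ℂ).mpr (Nat.succ_ne_zero (a+b+1))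
    push_cast at this
    intro hc; apply this; linear_combination hc
  rcases lt_trichotomy a b with h | h | h
  · exact pointwise_lt k hk x y a b h hA hB hn
  · subst h
    exact pointwise_diag k hk x y a hA
  · exact pointwise_gt k hk x y a b h hA hB hn


theorem weighted_sum_formula_two_variables (k : ℕ) (hk : 3 ≤ k) (x y : ℂ)
    (hx : ‖x‖ < 1) (hy : ‖y‖ < 1) (hx0 : x ≠ 0) (hy0 : y ≠ 0) :
    ∑ j ∈ Finset.Icc 1 (k - 1), (2 : ℂ) ^ (j - 1) *
        (Li₂ (k - j) j (x⁻¹ * y) x + Li₂ (k - j) j (x * y⁻¹) y) +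
      Li₂ 1 (k - 1) x⁻¹ (x * y) + Li₂ 1 (k - 1) y⁻¹ (x * y) =
    (Li 1 x + Li 1 y) * Li (k - 1) (x * y) + (k - 1 : ℂ) * Li k (x * y) := by
  have hxy : ‖x * y‖ < 1 := by
    rw [norm_mul]
    calc ‖x‖ * ‖y‖ ≤ ‖x‖ * 1 := mul_le_mul_of_nonneg_left hy.le (norm_nonneg x)
      _ = ‖x‖ := mul_one _
      _ < 1 := hx
  have St1 : ∀ j, Summable (t1 k j x y) := fun j => summable_of_bound x y hx hy _ (t1_bound k j x y)
  have St2 : ∀ j, Summable (t2 k j x y) := fun j => summable_of_bound x y hx hy _ (t2_bound k j x y)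
  have St3 : Summable (t3 k x y) := summable_of_bound x y hx hy _ (t3_bound k x y)
  have St4 : Summable (t4 k x y) := summable_of_bound x y hx hy _ (t4_bound k x y)
  have Sr1 : Summable (r1 k x y) := summable_of_bound x y hx hy _ (r1_bound k x y)
  have Sr2 : Summable (r2 k x y) := summable_of_bound x y hx hy _ (r2_bound k x y)
  have Sr3 : Summable (r3 k x y) := summable_of_bound x y hx hy _ (r3_bound k x y)
  have hterm : ∀ j ∈ Finset.Icc 1 (k-1), (2:ℂ)^(j-1) * (Li₂ (k-j) j (x⁻¹ * y) x + Li₂ (k-j) j (x * y⁻¹) y)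
      = ∑' p : ℕ × ℕ, (2:ℂ)^(j-1) * (t1 k j x y p + t2 k j x y p) := by
    intro j _
    rw [conv1 k j x y hx0, conv2 k j x y hy0, ← Summable.tsum_add (St1 j) (St2 j), ← tsum_mul_left]
  rw [Finset.sum_congr rfl hterm]
  have hsummand : ∀ j ∈ Finset.Icc 1 (k-1),
      Summable (fun p : ℕ × ℕ => (2:ℂ)^(j-1) * (t1 k j x y p + t2 k j x y p)) :=
    fun j _ => ((St1 j).add (St2 j)).mul_left _
  rw [← Summable.tsum_finsetSum hsummand]
  have Ssum : Summable (fun p : ℕ × ℕ =>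
      ∑ j ∈ Finset.Icc 1 (k-1), (2:ℂ)^(j-1) * (t1 k j x y p + t2 k j x y p)) :=
    summable_sum hsummand
  rw [conv3 k x y hx0, conv4 k x y hy0]
  rw [← Summable.tsum_add Ssum St3, ← Summable.tsum_add (Ssum.add St3) St4]
  rw [add_mul, conv5 k x y hx hxy, conv6 k x y hy hxy, conv7 k x y, ← tsum_mul_left]
  rw [← Summable.tsum_add Sr1 Sr2, ← Summable.tsum_add (Sr1.add Sr2) (Sr3.mul_left _)]
  exact tsum_congr fun p => by
    obtain ⟨a, b⟩ := p
    exact pointwise k hk x y a b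
end

section
/- For a fixed complex $y$ with $|y| \leq 1$, $y \neq 1$, the Möbius-type substitution $x \mapsto \frac{1-x}{1-xy}$ is an involution on its domain, and one has the derivative identity $\frac{\partial}{\partial x} \mathcal{L}_{\underbrace{1,\ldots,1}_{j}}\left(\frac{1-x}{1-xy}, y\right) = -\frac{1}{x} \mathcal{L}_{\underbrace{1,\ldots,1}_{j-1}}\left(\frac{1-x}{1-xy}, y\right)$ for $j \geq 1$ (with $\mathcal{L}_\emptyset = 1$), valid for $x$ with $0 < |x| < 1$ and $|(1-x)/(1-xy)| < 1$. -/
open scoped BigOperators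

/-- The two-variable multiple polylogarithm
`𝓛_{k₁,…,k_r}(x,y) = ∑_{n₁,…,n_r ≥ 1} ∏_j x^{n_j}(1-y^{n_j}) / ∏_j (n₁+⋯+n_j)^{k_j}`. -/
noncomputable def LL {r : ℕ} (k : Fin r → ℕ) (x y : ℂ) : ℂ :=
  ∑' n : Fin r → ℕ+, (∏ j, x ^ (n j : ℕ) * (1 - y ^ (n j : ℕ))) /
    ∏ j, (((∑ ν ∈ Finset.Iic j, (n ν : ℕ)) : ℕ) : ℂ) ^ k j

/-- The multiple polylogarithm
`Li_{k₁,…,k_r}(z₁,…,z_r) = ∑_{0<m₁<⋯<m_r} z₁^{m₁}⋯z_r^{m_r} / (m₁^{k₁}⋯m_r^{k_r})`,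
with `m_j = n₁ + ⋯ + n_j`. -/
noncomputable def LiM {r : ℕ} (k : Fin r → ℕ) (z : Fin r → ℂ) : ℂ :=
  ∑' n : Fin r → ℕ+, (∏ j, z j ^ (∑ ν ∈ Finset.Iic j, (n ν : ℕ))) /
    ∏ j, (((∑ ν ∈ Finset.Iic j, (n ν : ℕ)) : ℕ) : ℂ) ^ k j

section Aux
open Equiv Finset

lemma Ici_zero_fin (n : ℕ) : Finset.Ici (0 : Fin (n+1)) = Finset.univ := by
  ext ν; simp [Fin.zero_le]

lemma Ici_succ_map {n : ℕ} (i : Fin n) :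
    Finset.Ici i.succ = (Finset.Ici i).map ⟨Fin.succ, Fin.succ_injective n⟩ := by
  ext ν
  simp only [Finset.mem_Ici, Finset.mem_map, Function.Embedding.coeFn_mk]
  constructor
  · intro h
    cases ν using Fin.cases with
    | zero => exact absurd (Fin.le_zero_iff.mp h) (Fin.succ_ne_zero i)
    | succ μ => exact ⟨μ, Fin.succ_le_succ_iff.mp h, rfl⟩
  · rintro ⟨μ, hμ, rfl⟩; exact Fin.succ_le_succ_iff.mpr hμ

lemma suff_perm_sum : ∀ (n : ℕ) (k : Fin n → ℕ+),
    ∑ σ : Equiv.Perm (Fin n), ∏ i, (((∑ ν ∈ Finset.Ici i, (k (σ ν) : ℕ)) : ℕ) : ℂ)⁻¹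
      = ∏ i, ((k i : ℕ) : ℂ)⁻¹ := by
  intro n
  induction n with
  | zero =>
    intro k
    simp
  | succ n ih =>
    intro k
    have hS : (((∑ ν, (k ν : ℕ)) : ℕ) : ℂ) ≠ 0 := by
      have : 0 < ∑ ν, (k ν : ℕ) := by
        refine Finset.sum_pos (fun i _ => (k i).pos) ⟨0, Finset.mem_univ _⟩
      exact_mod_cast this.ne'
    calc ∑ σ : Equiv.Perm (Fin (n+1)), ∏ i, (((∑ ν ∈ Finset.Ici i, (k (σ ν) : ℕ)) : ℕ) : ℂ)⁻¹
        = ∑ x : Fin (n+1) × Equiv.Perm (Fin n),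
            ∏ i, (((∑ ν ∈ Finset.Ici i, (k (Equiv.Perm.decomposeFin.symm x ν) : ℕ)) : ℕ) : ℂ)⁻¹ := by
          rw [Equiv.sum_comp Equiv.Perm.decomposeFin.symm
            (fun σ => ∏ i, (((∑ ν ∈ Finset.Ici i, (k (σ ν) : ℕ)) : ℕ) : ℂ)⁻¹)]
      _ = ∑ p : Fin (n+1), ∑ τ : Equiv.Perm (Fin n),
            ((((∑ ν, (k ν : ℕ)) : ℕ) : ℂ)⁻¹ *
            ∏ i : Fin n, (((∑ ν ∈ Finset.Ici i,
              ((fun j => k (Equiv.swap 0 p j.succ)) (τ ν) : ℕ)) : ℕ) : ℂ)⁻¹) := by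
          rw [Fintype.sum_prod_type]
          refine Finset.sum_congr rfl (fun p _ => Finset.sum_congr rfl (fun τ _ => ?_))
          rw [Fin.prod_univ_succ]
          congr 1
          · congr 2
            rw [Ici_zero_fin]
            exact Equiv.sum_comp (Equiv.Perm.decomposeFin.symm (p, τ)) (fun ν => (k ν : ℕ))
          · refine Finset.prod_congr rfl (fun i _ => ?_)
            congr 2
            rw [Ici_succ_map, Finset.sum_map]
            refine Finset.sum_congr rfl (fun ν _ => ?_)
            simp [Equiv.Perm.decomposeFin_symm_apply_succ]
      _ = ∑ p : Fin (n+1), (((∑ ν, (k ν : ℕ)) : ℕ) : ℂ)⁻¹ *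
            ∏ j : Fin n, ((k (Equiv.swap 0 p j.succ) : ℕ) : ℂ)⁻¹ := by
          refine Finset.sum_congr rfl (fun p _ => ?_)
          rw [← Finset.mul_sum, ih (fun j => k (Equiv.swap 0 p j.succ))]
      _ = ∏ i, ((k i : ℕ) : ℂ)⁻¹ := by
          have key : ∀ p : Fin (n+1), ∏ j : Fin n, ((k (Equiv.swap 0 p j.succ) : ℕ) : ℂ)⁻¹
              = ((k p : ℕ) : ℂ) * ∏ i, ((k i : ℕ) : ℂ)⁻¹ := by
            intro p
            have hkp : ((k p : ℕ) : ℂ) ≠ 0 := by exact_mod_cast (k p).pos.ne'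
            have h0 : ((k p : ℕ) : ℂ) * ∏ j : Fin n, ((k (Equiv.swap 0 p j.succ) : ℕ) : ℂ)
                = ∏ i, ((k i : ℕ) : ℂ) := by
              have h1 := Equiv.prod_comp (Equiv.Perm.decomposeFin.symm (p, 1))
                (fun i => ((k i : ℕ) : ℂ))
              rw [Fin.prod_univ_succ] at h1
              simpa [Equiv.Perm.decomposeFin_symm_apply_zero,
                Equiv.Perm.decomposeFin_symm_apply_succ] using h1
            rw [Finset.prod_inv_distrib, Finset.prod_inv_distrib, ← h0, mul_inv,
              ← mul_assoc, mul_inv_cancel₀ hkp, one_mul]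
          rw [Finset.sum_congr rfl (fun p _ => by rw [key p]), ← Finset.mul_sum,
            ← Finset.sum_mul]
          have hsum : ∑ p : Fin (n+1), ((k p : ℕ) : ℂ) = (((∑ ν, (k ν : ℕ)) : ℕ) : ℂ) := by
            push_cast; ring
          rw [hsum, ← mul_assoc, inv_mul_cancel₀ hS, one_mul]

lemma sum_Ici_rev {n : ℕ} (i : Fin n) (f : Fin n → ℕ) :
    ∑ ν ∈ Finset.Ici i, f ν.rev = ∑ ν ∈ Finset.Iic i.rev, f ν := by
  refine Finset.sum_nbij' (i := Fin.rev) (j := Fin.rev) ?_ ?_ ?_ ?_ ?_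
  · intro a ha; simp only [Finset.mem_Ici] at ha; simpa using Fin.rev_le_rev.mpr ha
  · intro a ha; simp only [Finset.mem_Iic] at ha
    simp only [Finset.mem_Ici]
    rw [← Fin.rev_rev i]; exact Fin.rev_le_rev.mpr ha
  · intro a _; exact Fin.rev_rev a
  · intro a _; exact Fin.rev_rev a
  · intro a _; rfl

lemma pref_perm_sum (n : ℕ) (k : Fin n → ℕ+) :
    ∑ σ : Equiv.Perm (Fin n), ∏ i, (((∑ ν ∈ Finset.Iic i, (k (σ ν) : ℕ)) : ℕ) : ℂ)⁻¹
      = ∏ i, ((k i : ℕ) : ℂ)⁻¹ := by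
  rw [← suff_perm_sum n k,
    ← Equiv.sum_comp (Equiv.mulRight (Fin.revPerm : Equiv.Perm (Fin n)))
      (fun σ => ∏ i, (((∑ ν ∈ Finset.Ici i, (k (σ ν) : ℕ)) : ℕ) : ℂ)⁻¹)]
  refine Finset.sum_congr rfl (fun σ _ => ?_)
  calc ∏ i, (((∑ ν ∈ Finset.Iic i, (k (σ ν) : ℕ)) : ℕ) : ℂ)⁻¹
      = ∏ i : Fin n, (((∑ ν ∈ Finset.Iic (Fin.rev i), (k (σ ν) : ℕ)) : ℕ) : ℂ)⁻¹ :=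
        (Equiv.prod_comp (Fin.revPerm : Equiv.Perm (Fin n))
          (fun i => (((∑ ν ∈ Finset.Iic i, (k (σ ν) : ℕ)) : ℕ) : ℂ)⁻¹)).symm
    _ = ∏ i, (((∑ ν ∈ Finset.Ici i, (k ((Equiv.mulRight (Fin.revPerm : Equiv.Perm (Fin n)) σ) ν) : ℕ)) : ℕ) : ℂ)⁻¹ := by
        refine Finset.prod_congr rfl (fun i _ => ?_)
        congr 2
        rw [← sum_Ici_rev i (fun ν => (k (σ ν) : ℕ))]
        rfl

section sums
variable {w y : ℂ}

lemma summable_c (hw : ‖w‖ < 1) : Summable (fun n : ℕ+ => 2 * ‖w‖ ^ (n : ℕ)) :=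
  (((summable_geometric_of_lt_one (norm_nonneg w) hw).mul_left 2)).comp_injective
    (fun a b h => PNat.coe_injective h)

lemma summable_pi_prod (j : ℕ) (c : ℕ+ → ℝ) (hc : Summable c) (h0 : ∀ n, 0 ≤ c n) :
    Summable (fun n : Fin j → ℕ+ => ∏ i, c (n i)) := by
  induction j with
  | zero => exact .of_finite
  | succ j ih =>
    have h := hc.mul_of_nonneg ih h0 (fun n => Finset.prod_nonneg fun i _ => h0 _)
    have := ((Fin.consEquiv (fun _ => ℕ+)).symm).summable_iff.mpr h
    refine this.congr (fun n => ?_)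
    simp [Fin.consEquiv, Fin.prod_univ_succ, Fin.tail]

lemma tsum_pi_prod (j : ℕ) (f : ℕ+ → ℂ) (hf : Summable (fun n => ‖f n‖)) :
    ∑' n : Fin j → ℕ+, ∏ i, f (n i) = (∑' n : ℕ+, f n) ^ j := by
  induction j with
  | zero => simp [tsum_eq_single (fun (i : Fin 0) => (1:ℕ+)) (fun b hb => by
      exact absurd (funext fun i => i.elim0) hb)]
  | succ j ih =>
    have hfj : Summable (fun n : Fin j → ℕ+ => ‖∏ i, f (n i)‖) := by
      refine (summable_pi_prod j (fun n => ‖f n‖) hf (fun _ => norm_nonneg _)).congr fun n => ?_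
      rw [norm_prod]
    rw [pow_succ, ← ih, tsum_mul_tsum_of_summable_norm hfj hf]
    rw [← Equiv.tsum_eq (((Fin.consEquiv (fun _ => ℕ+)).symm).trans (Equiv.prodComm _ _))]
    refine tsum_congr fun n => ?_
    simp [Fin.consEquiv, Fin.prod_univ_succ, Fin.tail, mul_comm]
end sums

section main
variable {w y : ℂ}

lemma norm_fac_le (hy : ‖y‖ ≤ 1) (m : ℕ+) :
    ‖w ^ (m : ℕ) * (1 - y ^ (m : ℕ))‖ ≤ 2 * ‖w‖ ^ (m : ℕ) := by
  rw [norm_mul, norm_pow]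
  have h2 : ‖1 - y ^ (m : ℕ)‖ ≤ 2 := by
    calc ‖1 - y ^ (m : ℕ)‖ ≤ ‖(1 : ℂ)‖ + ‖y ^ (m : ℕ)‖ := norm_sub_le _ _
      _ ≤ 1 + 1 := by
          rw [norm_one, norm_pow]
          exact add_le_add le_rfl (pow_le_one₀ (norm_nonneg y) hy)
      _ = 2 := by norm_num
  calc ‖w‖ ^ (m : ℕ) * ‖1 - y ^ (m : ℕ)‖ ≤ ‖w‖ ^ (m : ℕ) * 2 :=
        mul_le_mul_of_nonneg_left h2 (by positivity)
    _ = 2 * ‖w‖ ^ (m : ℕ) := mul_comm _ _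

lemma inv_fac_le (j : ℕ) (σ : Equiv.Perm (Fin j)) (n : Fin j → ℕ+) (i : Fin j) :
    ‖(((∑ ν ∈ Finset.Iic i, (n (σ ν) : ℕ)) : ℕ) : ℂ)⁻¹‖ ≤ 1 := by
  rw [norm_inv, Complex.norm_natCast]
  have h1 : 1 ≤ ∑ ν ∈ Finset.Iic i, (n (σ ν) : ℕ) := by
    calc 1 ≤ (n (σ i) : ℕ) := (n (σ i)).one_le
      _ ≤ _ := Finset.single_le_sum (f := fun ν => (n (σ ν) : ℕ))
          (fun ν _ => Nat.zero_le _) (Finset.mem_Iic.mpr le_rfl)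
  exact inv_le_one_of_one_le₀ (by exact_mod_cast h1)

lemma norm_term_le_s17 (hy : ‖y‖ ≤ 1) (j : ℕ) (σ : Equiv.Perm (Fin j)) (n : Fin j → ℕ+) :
    ‖(∏ i, w ^ (n i : ℕ) * (1 - y ^ (n i : ℕ))) *
      ∏ i, (((∑ ν ∈ Finset.Iic i, (n (σ ν) : ℕ)) : ℕ) : ℂ)⁻¹‖
      ≤ ∏ i, 2 * ‖w‖ ^ (n i : ℕ) := by
  rw [norm_mul]
  calc ‖∏ i, w ^ (n i : ℕ) * (1 - y ^ (n i : ℕ))‖ *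
        ‖∏ i, (((∑ ν ∈ Finset.Iic i, (n (σ ν) : ℕ)) : ℕ) : ℂ)⁻¹‖
      ≤ (∏ i, 2 * ‖w‖ ^ (n i : ℕ)) * 1 := by
        refine mul_le_mul ?_ ?_ (norm_nonneg _) (by positivity)
        · rw [norm_prod]
          exact Finset.prod_le_prod (fun i _ => norm_nonneg _)
            (fun i _ => norm_fac_le hy (n i))
        · rw [norm_prod]
          exact Finset.prod_le_one (fun i _ => norm_nonneg _)
            (fun i _ => inv_fac_le j σ n i)
    _ = _ := mul_one _

lemma summable_term (hw : ‖w‖ < 1) (hy : ‖y‖ ≤ 1) (j : ℕ) (σ : Equiv.Perm (Fin j)) :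
    Summable (fun n : Fin j → ℕ+ =>
      (∏ i, w ^ (n i : ℕ) * (1 - y ^ (n i : ℕ))) *
      ∏ i, (((∑ ν ∈ Finset.Iic i, (n (σ ν) : ℕ)) : ℕ) : ℂ)⁻¹) :=
  Summable.of_norm_bounded
    (summable_pi_prod j _ (summable_c hw) (fun _ => by positivity))
    (norm_term_le_s17 hy j σ)
end main

lemma LL_one_mul_factorial {w y : ℂ} (j : ℕ) (hw : ‖w‖ < 1) (hy : ‖y‖ ≤ 1) :
    LL (fun _ : Fin j => 1) w y * (j.factorial : ℂ)
      = (∑' m : ℕ+, (w ^ (m : ℕ) * (1 - y ^ (m : ℕ))) / ((m : ℕ) : ℂ)) ^ j := by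
  classical
  set F : Equiv.Perm (Fin j) → (Fin j → ℕ+) → ℂ := fun σ n =>
    (∏ i, w ^ (n i : ℕ) * (1 - y ^ (n i : ℕ))) *
      ∏ i, (((∑ ν ∈ Finset.Iic i, (n (σ ν) : ℕ)) : ℕ) : ℂ)⁻¹ with hF
  have hLL : LL (fun _ : Fin j => 1) w y = ∑' n : Fin j → ℕ+, F 1 n := by
    unfold LL
    refine tsum_congr fun n => ?_
    simp only [hF, pow_one, Equiv.Perm.coe_one, id_eq]
    rw [div_eq_mul_inv, ← Finset.prod_inv_distrib]
  have hσ : ∀ σ : Equiv.Perm (Fin j), ∑' n, F σ n = ∑' n, F 1 n := by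
    intro σ
    set e : (Fin j → ℕ+) ≃ (Fin j → ℕ+) :=
      ⟨fun n => n ∘ σ, fun n => n ∘ σ.symm,
        fun n => by ext i; simp, fun n => by ext i; simp⟩ with he
    have hpt : ∀ n : Fin j → ℕ+, F 1 (e n) = F σ n := by
      intro n
      simp only [hF, he, Equiv.coe_fn_mk, Function.comp_apply, Equiv.Perm.coe_one, id_eq]
      congr 1
      exact Equiv.prod_comp σ (fun i => w ^ ((n i : ℕ)) * (1 - y ^ ((n i : ℕ))))
    rw [← Equiv.tsum_eq e (F 1), tsum_congr hpt]
  calc LL (fun _ : Fin j => 1) w y * (j.factorial : ℂ)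
      = ∑ σ : Equiv.Perm (Fin j), ∑' n, F σ n := by
        rw [Finset.sum_congr rfl (fun σ _ => hσ σ), Finset.sum_const, Finset.card_univ,
          Fintype.card_perm, Fintype.card_fin, nsmul_eq_mul, hLL, mul_comm]
    _ = ∑' n : Fin j → ℕ+, ∑ σ : Equiv.Perm (Fin j), F σ n :=
        (Summable.tsum_finsetSum (fun σ _ => summable_term hw hy j σ)).symm
    _ = ∑' n : Fin j → ℕ+,
          (∏ i, w ^ (n i : ℕ) * (1 - y ^ (n i : ℕ))) * ∏ i, ((n i : ℕ) : ℂ)⁻¹ := by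
        refine tsum_congr fun n => ?_
        simp only [hF]
        rw [← Finset.mul_sum, pref_perm_sum j n]
    _ = ∑' n : Fin j → ℕ+, ∏ i, (w ^ (n i : ℕ) * (1 - y ^ (n i : ℕ)) * ((n i : ℕ) : ℂ)⁻¹) := by
        refine tsum_congr fun n => (Finset.prod_mul_distrib).symm
    _ = (∑' m : ℕ+, w ^ (m : ℕ) * (1 - y ^ (m : ℕ)) * ((m : ℕ) : ℂ)⁻¹) ^ j := by
        refine tsum_pi_prod j (fun m : ℕ+ => w ^ (m : ℕ) * (1 - y ^ (m : ℕ)) * ((m : ℕ) : ℂ)⁻¹) ?_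
        refine Summable.of_nonneg_of_le (fun m => norm_nonneg _) (fun m => ?_) (summable_c hw)
        rw [norm_mul]
        have h1 : ‖((m : ℕ) : ℂ)⁻¹‖ ≤ 1 := by
          rw [norm_inv, Complex.norm_natCast]
          exact inv_le_one_of_one_le₀ (by exact_mod_cast m.one_le)
        calc ‖w ^ (m : ℕ) * (1 - y ^ (m : ℕ))‖ * ‖((m : ℕ) : ℂ)⁻¹‖
            ≤ (2 * ‖w‖ ^ (m : ℕ)) * 1 :=
              mul_le_mul (norm_fac_le hy m) h1 (norm_nonneg _) (by positivity)
          _ = 2 * ‖w‖ ^ (m : ℕ) := mul_one _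
    _ = (∑' m : ℕ+, (w ^ (m : ℕ) * (1 - y ^ (m : ℕ))) / ((m : ℕ) : ℂ)) ^ j := by
        refine congrArg (· ^ j) (tsum_congr fun m => (div_eq_mul_inv _ _).symm)

lemma g_eq_log {w y : ℂ} (hw : ‖w‖ < 1) (hy : ‖y‖ ≤ 1) :
    ∑' m : ℕ+, (w ^ (m : ℕ) * (1 - y ^ (m : ℕ))) / ((m : ℕ) : ℂ)
      = Complex.log (1 - w * y) - Complex.log (1 - w) := by
  have hwy : ‖w * y‖ < 1 := by
    calc ‖w * y‖ ≤ ‖w‖ * ‖y‖ := norm_mul_le _ _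
      _ ≤ ‖w‖ * 1 := by gcongr
      _ < 1 := by rwa [mul_one]
  have h1 := Complex.hasSum_taylorSeries_neg_log hw
  have h2 := Complex.hasSum_taylorSeries_neg_log hwy
  have h3 : HasSum (fun m : ℕ => (w ^ m * (1 - y ^ m)) / (m : ℂ))
      (Complex.log (1 - w * y) - Complex.log (1 - w)) := by
    have h4 := h1.sub h2
    have h5 : (fun n : ℕ => w ^ n / n - (w * y) ^ n / n)
        = fun m : ℕ => (w ^ m * (1 - y ^ m)) / (m : ℂ) := by
      funext n; rw [mul_pow]; ring
    rw [h5] at h4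
    convert h4 using 1
    case e'_3 => rfl
    ring
  have h6 : HasSum (fun m : ℕ+ => (w ^ (m : ℕ) * (1 - y ^ (m : ℕ))) / ((m : ℕ) : ℂ))
      (Complex.log (1 - w * y) - Complex.log (1 - w)) := by
    refine (Function.Injective.hasSum_iff (f := fun m : ℕ => (w ^ m * (1 - y ^ m)) / (m : ℂ))
      PNat.coe_injective ?_).mpr h3
    intro n hn
    have hn0 : n = 0 := by
      by_contra h
      exact hn ⟨⟨n, Nat.pos_of_ne_zero h⟩, rfl⟩
    subst hn0
    simp
  exact h6.tsum_eq

lemma LL_one_eq {w y : ℂ} (j : ℕ) (hw : ‖w‖ < 1) (hy : ‖y‖ ≤ 1) :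
    LL (fun _ : Fin j => 1) w y
      = (Complex.log (1 - w * y) - Complex.log (1 - w)) ^ j / (j.factorial : ℂ) := by
  have hfac : (j.factorial : ℂ) ≠ 0 := Nat.cast_ne_zero.mpr j.factorial_ne_zero
  rw [eq_div_iff hfac, LL_one_mul_factorial j hw hy, g_eq_log hw hy]

lemma one_sub_mem_slit {z : ℂ} (hz : ‖z‖ < 1) : 1 - z ∈ Complex.slitPlane := by
  have h1 : z.re ≤ ‖z‖ := (abs_le.mp (Complex.abs_re_le_norm z)).2
  left
  simp only [Complex.sub_re, Complex.one_re]
  linarith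

lemma one_sub_ne_zero {z : ℂ} (hz : ‖z‖ < 1) : 1 - z ≠ 0 := by
  intro h
  have : z = 1 := by linear_combination -h
  rw [this] at hz
  simp at hz

end Aux

theorem mobius_involution_and_deriv (y : ℂ) (hy : ‖y‖ ≤ 1) (hy1 : y ≠ 1) :
    (∀ x : ℂ, x * y ≠ 1 →
      (1 - (1 - x) / (1 - x * y)) / (1 - (1 - x) / (1 - x * y) * y) = x) ∧
    (∀ j : ℕ, 1 ≤ j → ∀ x : ℂ, 0 < ‖x‖ → ‖x‖ < 1 → ‖(1 - x) / (1 - x * y)‖ < 1 →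
      HasDerivAt (fun t : ℂ => LL (fun _ : Fin j => 1) ((1 - t) / (1 - t * y)) y)
        (-(1 / x) * LL (fun _ : Fin (j - 1) => 1) ((1 - x) / (1 - x * y)) y) x) := by
  have hy2 : 1 - y ≠ 0 := sub_ne_zero.mpr (Ne.symm hy1)
  constructor
  · intro x hxy
    have h1 : 1 - x * y ≠ 0 := sub_ne_zero.mpr (Ne.symm hxy)
    have e1 : 1 - (1 - x) / (1 - x * y) = x * (1 - y) / (1 - x * y) := by
      field_simp; ring
    have e2 : 1 - (1 - x) / (1 - x * y) * y = (1 - y) / (1 - x * y) := by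
      field_simp; ring
    rw [e1, e2]
    rw [div_div_div_cancel_right₀]
    · exact mul_div_cancel_right₀ x hy2
    · exact h1
  · intro j hj x hx0 hx1 hux
    obtain ⟨m, rfl⟩ : ∃ m, j = m + 1 := ⟨j - 1, (Nat.succ_pred_eq_of_pos hj).symm⟩
    simp only [Nat.succ_sub_one]
    have hx : x ≠ 0 := by
      intro h; rw [h] at hx0; simp at hx0
    have hxy : ‖x * y‖ < 1 := by
      calc ‖x * y‖ ≤ ‖x‖ * ‖y‖ := norm_mul_le _ _
        _ ≤ ‖x‖ * 1 := by gcongr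
        _ < 1 := by rwa [mul_one]
    have h1 : 1 - x * y ≠ 0 := one_sub_ne_zero hxy
    have huy : ‖(1 - x) / (1 - x * y) * y‖ < 1 := by
      calc ‖(1 - x) / (1 - x * y) * y‖ ≤ ‖(1 - x) / (1 - x * y)‖ * ‖y‖ := norm_mul_le _ _
        _ ≤ ‖(1 - x) / (1 - x * y)‖ * 1 := by gcongr
        _ < 1 := by rwa [mul_one]
    have h2 : 1 - (1 - x) / (1 - x * y) ≠ 0 := one_sub_ne_zero hux
    have h3 : 1 - (1 - x) / (1 - x * y) * y ≠ 0 := one_sub_ne_zero huy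
    have e1' : 1 - (1 - x) / (1 - x * y) = x * (1 - y) / (1 - x * y) := by
      field_simp; ring
    have e2' : 1 - (1 - x) / (1 - x * y) * y = (1 - y) / (1 - x * y) := by
      field_simp; ring
    have hu' := (((hasDerivAt_id x).const_sub 1).div
      (((hasDerivAt_id x).mul_const y).const_sub 1) h1)
    have hu2 : HasDerivAt (fun t : ℂ => (1 - t) / (1 - t * y))
        ((y - 1) / (1 - x * y) ^ 2) x := by
      convert hu' using 1
      case e'_4 => rfl
      case e'_5 => rfl
      case e'_8 => rfl
      simp only [id_eq]
      field_simp
      ring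
    have hlog1 : HasDerivAt (fun t : ℂ => Complex.log (1 - (1 - t) / (1 - t * y) * y))
        ((-((y - 1) / (1 - x * y) ^ 2 * y)) / (1 - (1 - x) / (1 - x * y) * y)) x :=
      ((hu2.mul_const y).const_sub 1).clog (one_sub_mem_slit huy)
    have hlog2 : HasDerivAt (fun t : ℂ => Complex.log (1 - (1 - t) / (1 - t * y)))
        ((-((y - 1) / (1 - x * y) ^ 2)) / (1 - (1 - x) / (1 - x * y))) x :=
      (hu2.const_sub 1).clog (one_sub_mem_slit hux)
    have hG : HasDerivAt (fun t : ℂ => Complex.log (1 - (1 - t) / (1 - t * y) * y)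
        - Complex.log (1 - (1 - t) / (1 - t * y))) (-(1 / x)) x := by
      have h4 := hlog1.sub hlog2
      convert h4 using 1
      case e'_4 => rfl
      case e'_5 => rfl
      case e'_8 => rfl
      rw [e1', e2']
      field_simp
      ring
    have hpow := (hG.pow (m + 1)).div_const (((m + 1).factorial : ℂ))
    have hcont : ContinuousAt (fun t : ℂ => ‖(1 - t) / (1 - t * y)‖) x :=
      ((continuousAt_const.sub continuousAt_id).div
        (continuousAt_const.sub (continuousAt_id.mul continuousAt_const)) h1).norm
    have hev0 : ∀ᶠ t in nhds x, ‖(1 - t) / (1 - t * y)‖ < 1 :=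
      hcont (Iio_mem_nhds hux)
    have hev : (fun t : ℂ => LL (fun _ : Fin (m + 1) => 1) ((1 - t) / (1 - t * y)) y)
        =ᶠ[nhds x] (fun t : ℂ => (Complex.log (1 - (1 - t) / (1 - t * y) * y)
          - Complex.log (1 - (1 - t) / (1 - t * y))) ^ (m + 1) / (((m + 1).factorial : ℂ))) :=
      hev0.mono (fun t ht => LL_one_eq (m + 1) ht hy)
    rw [Filter.EventuallyEq.hasDerivAt_iff hev, LL_one_eq m hux hy]
    convert hpow using 1
    case e'_4 => rfl
    case e'_8 => rfl
    have hfacm : ((m.factorial : ℂ)) ≠ 0 := Nat.cast_ne_zero.mpr m.factorial_ne_zero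
    have hm1 : ((m + 1 : ℕ) : ℂ) ≠ 0 := Nat.cast_ne_zero.mpr (Nat.succ_ne_zero m)
    have hfs : (((m + 1).factorial : ℕ) : ℂ) = ((m + 1 : ℕ) : ℂ) * (m.factorial : ℂ) := by
      rw [Nat.factorial_succ]; push_cast; ring
    simp only [Nat.add_sub_cancel]
    rw [hfs]
    generalize (Complex.log (1 - (1 - x) / (1 - x * y) * y)
      - Complex.log (1 - (1 - x) / (1 - x * y))) = L
    have hden : ((m : ℂ) * x * (m.factorial : ℂ) + x * (m.factorial : ℂ)) ≠ 0 := by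
      have e : ((m : ℂ) * x * (m.factorial : ℂ) + x * (m.factorial : ℂ))
          = ((m : ℂ) + 1) * (x * (m.factorial : ℂ)) := by ring
      rw [e]
      exact mul_ne_zero (by exact_mod_cast hm1) (mul_ne_zero hx hfacm)
    field_simp
end
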